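/- Let K/k be a finite Galois extension of number fields with group G, S a G-stable set of places of K containing the Archimedean ones, and H ≤ G. Under the embedding ℤ[S(K^H)] → ℤ[S] sending a place 𝔭 of K^H to Σ_{𝔮|𝔭} f_𝔭 𝔮 (where f_𝔭 is the residue degree of 𝔭 in K/K^H), the index of I_{K^H,S} in (I_{K,S})^H equals n(H)/l(H), where n(H) = ∏_{𝔭 ∈ S(K^H)} f_𝔭 and l(H) = lcm{f_𝔭 : 𝔭 ∈ S(K^H)}. -/

import Mathlib

set_option linter.unusedSectionVars false


open scoped TensorProduct

section Core

variable (G : Type) [Group G] [Fintype G]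

/-- The `H`-fixed points of a `ℤ[G]`-module `M`, as a `ℤ`-submodule. -/
def fixedPts (M : Type) [AddCommGroup M] [DistribMulAction G M] (H : Subgroup G) :
    Submodule ℤ M where
  carrier := {x | ∀ h ∈ H, h • x = x}
  add_mem' := fun ha hb h hh => by rw [smul_add, ha h hh, hb h hh]
  zero_mem' := fun h hh => smul_zero h
  smul_mem' := fun n x hx h hh => by
    simpa [hx h hh] using (DistribMulAction.toAddMonoidHom M h).map_zsmul n x

/-- The permutation character of `ℚ[G/H]`, given by counting fixed points. -/
noncomputable def permChar (H : Subgroup G) (g : G) : ℤ :=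
  Nat.card {x : G ⧸ H // g • x = x}

/-- A Brauer relation: a formal `ℤ`-linear combination `Θ = Σ_H n_H · H` of subgroups of `G`
such that the virtual permutation representation `⊕_H ℚ[G/H]^{⊕ n_H}` is zero, i.e. such that
the corresponding linear combination of permutation characters vanishes. -/
noncomputable def IsBrauerRel (n : Subgroup G →₀ ℤ) : Prop :=
  ∀ g : G, ∑ H ∈ n.support, n H * permChar G H g = 0

/-- A family `v i` of elements of a submodule `S` whose images form a `ℤ`-basis
of `S` modulo torsion. -/
def IsTorsionBasis {M : Type} [AddCommGroup M] {κ : Type} [Fintype κ]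
    (S : Submodule ℤ M) (v : κ → M) : Prop :=
  (∀ i, v i ∈ S) ∧
  (∀ x ∈ S, ∃ c : κ → ℤ, x - ∑ i, c i • v i ∈ Submodule.torsion ℤ M) ∧
  (∀ c : κ → ℤ, (∑ i, c i • v i) ∈ Submodule.torsion ℤ M → c = 0)

/-- `G`-invariance of a bilinear pairing. -/
def IsGInvariant {M : Type} [AddCommGroup M] [DistribMulAction G M]
    (B : M →ₗ[ℤ] M →ₗ[ℤ] ℚ) : Prop :=
  ∀ (g : G) (x y : M), B (g • x) (g • y) = B x y

/-- Non-degeneracy of a pairing on `M` modulo torsion. -/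
def NondegModTorsion {M : Type} [AddCommGroup M] (B : M →ₗ[ℤ] M →ₗ[ℤ] ℚ) : Prop :=
  ∀ x : M, (∀ y : M, B x y = 0) → x ∈ Submodule.torsion ℤ M

/-- The regulator constant `C_Θ(M) = ∏_H det((1/|H|)⟨·,·⟩ | M^H/tors)^{n_H}`, computed with
respect to a pairing `B` and chosen families `v H` spanning `M^H` modulo torsion
(the Gram determinant does not depend on this choice). -/
noncomputable def regConst {M : Type} [AddCommGroup M] [DistribMulAction G M]
    (B : M →ₗ[ℤ] M →ₗ[ℤ] ℚ) (n : Subgroup G →₀ ℤ)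
    (ι : Subgroup G → Type) [∀ H, Fintype (ι H)] [∀ H, DecidableEq (ι H)]
    (v : ∀ H : Subgroup G, ι H → M) : ℚ :=
  ∏ H ∈ n.support,
    (Matrix.det (Matrix.of fun i j : ι H => (Nat.card H : ℚ)⁻¹ * B (v H i) (v H j))) ^ (n H)

end Core

open scoped Classical

attribute [local instance] Finsupp.comapSMul Finsupp.comapMulAction Finsupp.comapDistribMulAction

section DeSmit

/- We model the $G$-stable set $S$ of places of $K$ as a finite $G$-set; the set
$S(K^H)$ of places of $K^H$ below those of $S$ is the set of $H$-orbits of $S$, and the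
degree $f_𝔭$ of a place $𝔭$ of $K^H$ (the residue field degree at a finite, respectively
the local degree at an archimedean, place) is the order of the decomposition group, i.e.
$f_𝔭 = |H|/|\{𝔮 ∈ S : 𝔮 \mid 𝔭\}|$. -/

variable (G : Type) [Group G] [Fintype G] (S : Type) [Fintype S] [MulAction G S]
  (H : Subgroup G)

/-- The set $S(K^H)$ of places below $S$: the $H$-orbits of $S$. -/
noncomputable def placesBelow := Quotient (MulAction.orbitRel H S)

noncomputable instance : Fintype (placesBelow G S H) := by
  unfold placesBelow; infer_instance

/-- The degree $f_𝔭$ of a place $𝔭 ∈ S(K^H)$ in $K/K^H$: the order of its decomposition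
group in $H$, i.e. $|H|$ divided by the number of places of $K$ above $𝔭$. -/
noncomputable def placeDeg (P : placesBelow G S H) : ℕ :=
  Nat.card H / Nat.card {s : S // Quotient.mk (MulAction.orbitRel H S) s = P}

/-- The augmentation map $ℤ[T] → ℤ$. -/
noncomputable def aug (T : Type) : (T →₀ ℤ) →ₗ[ℤ] ℤ :=
  Finsupp.lsum ℤ (fun _ : T => LinearMap.id)

/-- The embedding $ℤ[S(K^H)] → ℤ[S]$ given by $𝔭 ↦ Σ_{𝔮 ∣ 𝔭} f_𝔭 𝔮$. -/
noncomputable def placesEmb : (placesBelow G S H →₀ ℤ) →ₗ[ℤ] (S →₀ ℤ) :=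
  Finsupp.lsum ℤ fun P =>
    LinearMap.toSpanSingleton ℤ (S →₀ ℤ)
      (∑ s : S, if Quotient.mk (MulAction.orbitRel H S) s = P
        then Finsupp.single s (placeDeg G S H P : ℤ) else 0)

/-- fiber count -/
noncomputable def fm (P : placesBelow G S H) : ℕ :=
  Nat.card {s : S // Quotient.mk (MulAction.orbitRel H S) s = P}

noncomputable def fiber_equiv (P : placesBelow G S H) :
    {s : S // Quotient.mk (MulAction.orbitRel H S) s = P} ≃ MulAction.orbit H P.out := by
  apply Equiv.subtypeEquivRight
  intro s
  conv_lhs => rw [← P.out_eq]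
  exact Quotient.eq''

lemma fm_pos (P : placesBelow G S H) : 0 < fm G S H P := by
  have : Nonempty {s : S // Quotient.mk (MulAction.orbitRel H S) s = P} := ⟨⟨P.out, P.out_eq⟩⟩
  exact Nat.card_pos

lemma fm_dvd (P : placesBelow G S H) : fm G S H P ∣ Nat.card H := by
  have h := MulAction.card_orbit_mul_card_stabilizer_eq_card_group H P.out
  rw [← Nat.card_eq_fintype_card, ← Nat.card_eq_fintype_card, ← Nat.card_eq_fintype_card] at h
  exact Dvd.intro _ (by rw [← h, fm, Nat.card_congr (fiber_equiv G S H P), mul_comm])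

lemma placeDeg_mul (P : placesBelow G S H) :
    placeDeg G S H P * fm G S H P = Nat.card H :=
  Nat.div_mul_cancel (fm_dvd G S H P)

lemma placeDeg_pos (P : placesBelow G S H) : 0 < placeDeg G S H P := by
  have h := placeDeg_mul G S H P
  have h2 : 0 < Nat.card H := Nat.card_pos
  nlinarith [fm_pos G S H P]

lemma placeDeg_dvd (P : placesBelow G S H) : placeDeg G S H P ∣ Nat.card H :=
  ⟨fm G S H P, (placeDeg_mul G S H P).symm⟩

lemma lcm_dvd' : (Finset.univ : Finset (placesBelow G S H)).lcm (placeDeg G S H) ∣ Nat.card H :=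
  Finset.lcm_dvd fun P _ => placeDeg_dvd G S H P

lemma lcm_pos' : 0 < (Finset.univ : Finset (placesBelow G S H)).lcm (placeDeg G S H) :=
  Nat.pos_of_ne_zero fun h => by
    have hd := lcm_dvd' G S H; rw [h] at hd
    have h0 : Nat.card H = 0 := Nat.eq_zero_of_zero_dvd hd
    exact absurd h0 (Nat.pos_iff_ne_zero.mp Nat.card_pos)

lemma placeDeg_dvd_lcm (P : placesBelow G S H) :
    placeDeg G S H P ∣ (Finset.univ : Finset (placesBelow G S H)).lcm (placeDeg G S H) :=
  Finset.dvd_lcm (Finset.mem_univ P)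

lemma aug_apply {T : Type} [Fintype T] (x : T →₀ ℤ) : aug T x = ∑ t : T, x t := by
  rw [aug, Finsupp.lsum_apply, Finsupp.sum_fintype]
  · rfl
  · intro s; rfl

lemma placesEmb_apply (y : placesBelow G S H →₀ ℤ) (s : S) :
    placesEmb G S H y s
      = placeDeg G S H (Quotient.mk (MulAction.orbitRel H S) s)
        * y (Quotient.mk (MulAction.orbitRel H S) s) := by
  rw [placesEmb, Finsupp.lsum_apply, Finsupp.sum_fintype]
  · rw [Finsupp.finset_sum_apply]
    have h : ∀ P : placesBelow G S H,
        (LinearMap.toSpanSingleton ℤ (S →₀ ℤ)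
          (∑ t : S, if Quotient.mk (MulAction.orbitRel H S) t = P
            then Finsupp.single t (placeDeg G S H P : ℤ) else 0) (y P)) s
        = if Quotient.mk (MulAction.orbitRel H S) s = P
            then y P * placeDeg G S H P else 0 := by
      intro P
      rw [LinearMap.toSpanSingleton_apply, Finsupp.smul_apply, Finsupp.finset_sum_apply]
      rw [Finset.sum_eq_single s]
      · split_ifs with hs
        · simp [Finsupp.single_apply, smul_eq_mul]
        · simp
      · intro t _ hts
        split_ifs
        · simp [Finsupp.single_apply, hts]
        · simp
      · simp
    simp_rw [h]
    have h2 : (∑ x : placesBelow G S H,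
        if Quotient.mk (MulAction.orbitRel H S) s = x
          then y x * (placeDeg G S H x : ℤ) else 0)
        = (if Quotient.mk (MulAction.orbitRel H S) s = Quotient.mk (MulAction.orbitRel H S) s
            then y (Quotient.mk (MulAction.orbitRel H S) s)
              * (placeDeg G S H (Quotient.mk (MulAction.orbitRel H S) s) : ℤ) else 0) := by
      simp
      exact (@Finset.sum_ite_eq _ _ _ (fun a b => Classical.propDecidable (a = b)) Finset.univ (Quotient.mk (MulAction.orbitRel H S) s : placesBelow G S H)
        (fun x => y x * (placeDeg G S H x : ℤ))).trans (if_pos (Finset.mem_univ _))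
      -- leftover: if_pos case handled by rfl? sum_eq_single signature: (h₀ : ∀ b ∈ s, b ≠ a → f b = 0) (h₁ : a ∉ s → f a = 0); conclusion ∑ f = f a. So f a = if_pos.
    rw [h2, if_pos rfl, mul_comm]
  · intro P; simp

lemma smul_apply' (g : G) (x : S →₀ ℤ) (s : S) : (g • x) (g • s) = x s := by
  show (Finsupp.mapDomain (g • ·) x) (g • s) = x s
  exact Finsupp.mapDomain_apply (MulAction.injective g) x s

lemma fixed_const {x : S →₀ ℤ} (hx : x ∈ fixedPts G (S →₀ ℤ) H) {s t : S}
    (hst : Quotient.mk (MulAction.orbitRel H S) s = Quotient.mk (MulAction.orbitRel H S) t) :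
    x s = x t := by
  have hrel : s ∈ MulAction.orbit H t := Quotient.eq''.mp hst
  obtain ⟨h, rfl⟩ := hrel
  have hfix : (h : G) • x = x := hx h h.2
  conv_lhs => rw [← hfix]
  exact smul_apply' G S (h : G) x t

/-- regrouping a sum over S into fibers, for functions constant on fibers -/
lemma sum_fiber {x : S →₀ ℤ} (hx : x ∈ fixedPts G (S →₀ ℤ) H) :
    ∑ s : S, x s = ∑ P : placesBelow G S H, (fm G S H P : ℤ) * x P.out := by
  rw [← Finset.sum_fiberwise Finset.univ (fun s => Quotient.mk (MulAction.orbitRel H S) s)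
    (fun s => x s)]
  apply Finset.sum_congr rfl
  intro P _
  have hconst : ∀ s ∈ Finset.filter
      (fun s => Quotient.mk (MulAction.orbitRel H S) s = P) Finset.univ, x s = x P.out := by
    intro s hs
    have := (Finset.mem_filter.mp hs).2
    exact fixed_const G S H hx (by rw [this, P.out_eq])
  rw [Finset.sum_congr rfl hconst, Finset.sum_const, nsmul_eq_mul]
  congr 1
  unfold fm; rw [Nat.card_eq_fintype_card, Fintype.card_subtype]

noncomputable def Lsub : Submodule ℤ (S →₀ ℤ) := LinearMap.ker (aug S) ⊓ fixedPts G (S →₀ ℤ) H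

noncomputable def Asub : Submodule ℤ ↥(Lsub G S H) :=
  Submodule.comap (Lsub G S H).subtype
    (Submodule.map (placesEmb G S H) (LinearMap.ker (aug (placesBelow G S H))))

noncomputable def phi : ↥(Lsub G S H) →ₗ[ℤ] (∀ P : placesBelow G S H, ZMod (placeDeg G S H P)) :=
  AddMonoidHom.toIntLinearMap
  { toFun := fun x => fun P => (((x : S →₀ ℤ) P.out : ℤ) : ZMod (placeDeg G S H P))
    map_zero' := by funext P; simp
    map_add' := by intro a b; funext P; push_cast; simp }

lemma ker_phi : LinearMap.ker (phi G S H) = Asub G S H := by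
  ext x
  simp only [LinearMap.mem_ker, Asub, Submodule.mem_comap, Submodule.mem_map,
    LinearMap.mem_ker, Submodule.subtype_apply]
  constructor
  · intro hx
    have hdvd : ∀ P : placesBelow G S H,
        (placeDeg G S H P : ℤ) ∣ (x : S →₀ ℤ) P.out := by
      intro P
      have := congrFun hx P
      simpa using (ZMod.intCast_zmod_eq_zero_iff_dvd _ _).mp this
    set y : placesBelow G S H →₀ ℤ :=
      Finsupp.equivFunOnFinite.symm
        (fun P => (x : S →₀ ℤ) P.out / (placeDeg G S H P : ℤ)) with hy
    have hyapp : ∀ P, y P = (x : S →₀ ℤ) P.out / (placeDeg G S H P : ℤ) := fun P => rfl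
    have hembx : placesEmb G S H y = (x : S →₀ ℤ) := by
      ext s
      rw [placesEmb_apply]
      have e := hyapp (Quotient.mk (MulAction.orbitRel H S) s)
      have e2 := Int.mul_ediv_cancel' (hdvd (Quotient.mk (MulAction.orbitRel H S) s))
      exact (congrArg (fun t => (placeDeg G S H (Quotient.mk (MulAction.orbitRel H S) s) : ℤ) * t) e).trans
        (e2.trans (fixed_const G S H x.2.2 (Quotient.out_eq _)))
    refine ⟨y, ?_, hembx⟩
    · -- aug y = 0
      have hx0 : ∑ s : S, (x : S →₀ ℤ) s = 0 := by
        have h1 : aug S (x : S →₀ ℤ) = 0 := x.2.1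
        rwa [aug_apply] at h1
      rw [aug_apply]
      have hsum : (Nat.card H : ℤ) * ∑ P : placesBelow G S H, y P = 0 := by
        calc (Nat.card H : ℤ) * ∑ P : placesBelow G S H, y P
            = ∑ P : placesBelow G S H, (fm G S H P : ℤ) * ((x : S →₀ ℤ) P.out) := by
              rw [Finset.mul_sum]
              apply Finset.sum_congr rfl
              intro P _
              rw [hyapp, ← placeDeg_mul G S H P]
              push_cast
              rw [mul_comm ((placeDeg G S H P : ℤ)) ((fm G S H P : ℤ)), mul_assoc,
                Int.mul_ediv_cancel' (hdvd _)]
          _ = 0 := by rw [← sum_fiber G S H x.2.2, hx0]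
      have hH : (Nat.card H : ℤ) ≠ 0 := by
        exact_mod_cast (Nat.pos_iff_ne_zero.mp (Nat.card_pos (α := H)))
      exact (mul_eq_zero.mp hsum).resolve_left hH
  · rintro ⟨y, hy0, hyx⟩
    funext P
    have : (x : S →₀ ℤ) P.out = (placeDeg G S H P : ℤ) * y P := by
      rw [← hyx, placesEmb_apply]
      exact congrArg (fun q : placesBelow G S H => (placeDeg G S H q : ℤ) * y q) (Quotient.out_eq P)
    show (((x : S →₀ ℤ) P.out : ℤ) : ZMod (placeDeg G S H P)) = 0
    rw [this]
    push_cast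
    simp [ZMod.natCast_self]

/-- abbreviation for the lcm -/
noncomputable def lnum : ℕ := (Finset.univ : Finset (placesBelow G S H)).lcm (placeDeg G S H)

noncomputable def chiP (P : placesBelow G S H) :
    ZMod (placeDeg G S H P) →+ ZMod (lnum G S H) :=
  ZMod.lift _ ⟨(AddMonoidHom.mulRight ((lnum G S H / placeDeg G S H P : ℕ) : ZMod (lnum G S H))).comp
      (Int.castAddHom _), by
    simp only [AddMonoidHom.comp_apply, Int.coe_castAddHom, AddMonoidHom.mulRight_apply]
    push_cast
    rw [← Nat.cast_mul, show placeDeg G S H P * (lnum G S H / placeDeg G S H P) = lnum G S H from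
      Nat.mul_div_cancel' (by rw [lnum]; exact placeDeg_dvd_lcm G S H P), ZMod.natCast_self]⟩

lemma chiP_coe (P : placesBelow G S H) (a : ℤ) :
    chiP G S H P ((a : ℤ) : ZMod (placeDeg G S H P))
      = (a : ZMod (lnum G S H)) * ((lnum G S H / placeDeg G S H P : ℕ) : ZMod (lnum G S H)) := by
  rw [chiP, ZMod.lift_coe]
  rfl

noncomputable def psi : (∀ P : placesBelow G S H, ZMod (placeDeg G S H P)) →+ ZMod (lnum G S H) :=
  AddMonoidHom.mk' (fun r => ∑ P, chiP G S H P (r P)) (by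
    intro a b
    rw [← Finset.sum_add_distrib]
    apply Finset.sum_congr rfl
    intro P _
    rw [Pi.add_apply, map_add])

lemma psi_cast (b : placesBelow G S H → ℤ) :
    psi G S H (fun P => ((b P : ℤ) : ZMod (placeDeg G S H P)))
      = Int.cast (∑ P, b P * ((lnum G S H / placeDeg G S H P : ℕ) : ℤ)) := by
  show (∑ P, chiP G S H P _) = _
  rw [Int.cast_sum]
  apply Finset.sum_congr rfl
  intro P _
  rw [chiP_coe, Int.cast_mul, Int.cast_natCast]

lemma placeDeg_dvd_lnum (P : placesBelow G S H) : placeDeg G S H P ∣ lnum G S H :=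
  placeDeg_dvd_lcm G S H P

lemma lnum_pos : 0 < lnum G S H := lcm_pos' G S H

lemma lnum_mul_t : lnum G S H * (Nat.card H / lnum G S H) = Nat.card H :=
  Nat.mul_div_cancel' (lcm_dvd' G S H)

lemma fm_eq (P : placesBelow G S H) :
    fm G S H P = (lnum G S H / placeDeg G S H P) * (Nat.card H / lnum G S H) := by
  apply Nat.eq_of_mul_eq_mul_left (placeDeg_pos G S H P)
  rw [placeDeg_mul, ← mul_assoc, Nat.mul_div_cancel' (placeDeg_dvd_lnum G S H P),
    lnum_mul_t]

lemma t_pos : 0 < Nat.card H / lnum G S H := by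
  have h := lnum_mul_t G S H
  rcases Nat.eq_zero_or_pos (Nat.card H / lnum G S H) with h0 | h0
  · rw [h0, mul_zero] at h
    exact absurd h.symm (Nat.pos_iff_ne_zero.mp (Nat.card_pos (α := H)))
  · exact h0

lemma smul_apply'' (g : G) (x : S →₀ ℤ) (s : S) : (g • x) s = x (g⁻¹ • s) := by
  conv_lhs => rw [← smul_inv_smul g s]
  exact smul_apply' G S g x (g⁻¹ • s)

lemma mk_inv_smul (h : G) (hh : h ∈ H) (s : S) :
    Quotient.mk (MulAction.orbitRel H S) (h⁻¹ • s) = Quotient.mk (MulAction.orbitRel H S) s := by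
  apply Quotient.sound
  exact ⟨⟨h⁻¹, inv_mem hh⟩, rfl⟩

lemma mk_mem (c : placesBelow G S H → ℤ)
    (hc : ∑ P : placesBelow G S H, (fm G S H P : ℤ) * c P = 0) :
    (Finsupp.equivFunOnFinite.symm
      (fun s => c (Quotient.mk (MulAction.orbitRel H S) s))) ∈ Lsub G S H := by
  set x : S →₀ ℤ := Finsupp.equivFunOnFinite.symm
      (fun s => c (Quotient.mk (MulAction.orbitRel H S) s)) with hx
  have hxs : ∀ s : S, x s = c (Quotient.mk (MulAction.orbitRel H S) s) := fun s => rfl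
  have hfix : x ∈ fixedPts G (S →₀ ℤ) H := by
    intro h hh
    ext s
    rw [smul_apply'' G S h x s, hxs, hxs, mk_inv_smul G S H h hh]
  refine ⟨?_, hfix⟩
  show aug S x = 0
  rw [aug_apply, sum_fiber G S H hfix]
  rw [← hc]
  apply Finset.sum_congr rfl
  intro P _
  rw [hxs]
  exact congrArg (fun q : placesBelow G S H => (fm G S H P : ℤ) * c q) (Quotient.out_eq P)

lemma mem_range_phi (r : ∀ P : placesBelow G S H, ZMod (placeDeg G S H P)) :
    r ∈ LinearMap.range (phi G S H) ↔ psi G S H r = 0 := by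
  constructor
  · rintro ⟨x, rfl⟩
    have hphi : phi G S H x
        = fun P => (((x : S →₀ ℤ) P.out : ℤ) : ZMod (placeDeg G S H P)) := rfl
    rw [hphi, psi_cast G S H (fun P => (x : S →₀ ℤ) P.out)]
    have key : ∑ P : placesBelow G S H,
        (x : S →₀ ℤ) P.out * ((lnum G S H / placeDeg G S H P : ℕ) : ℤ) = 0 := by
      have hx0 : ∑ P : placesBelow G S H, (fm G S H P : ℤ) * (x : S →₀ ℤ) P.out = 0 := by
        rw [← sum_fiber G S H x.2.2]
        have h1 : aug S (x : S →₀ ℤ) = 0 := x.2.1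
        rwa [aug_apply] at h1
      have ht : ((Nat.card H / lnum G S H : ℕ) : ℤ) ≠ 0 := by
        exact_mod_cast Nat.pos_iff_ne_zero.mp (t_pos G S H)
      apply mul_left_cancel₀ ht
      rw [mul_zero, Finset.mul_sum, ← hx0]
      apply Finset.sum_congr rfl
      intro P _
      rw [fm_eq G S H P]
      push_cast
      ring
    rw [key]
    simp
  · intro h0
    rcases isEmpty_or_nonempty (placesBelow G S H) with hQ | hQ
    · refine ⟨0, ?_⟩
      funext P
      exact isEmptyElim P
    · -- choose lifts
      have fpos : ∀ P, NeZero (placeDeg G S H P) :=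
        fun P => ⟨Nat.pos_iff_ne_zero.mp (placeDeg_pos G S H P)⟩
      set a : placesBelow G S H → ℤ := fun P => ((r P).val : ℤ) with ha
      have hcast : ∀ P, ((a P : ℤ) : ZMod (placeDeg G S H P)) = r P := by
        intro P
        have := fpos P
        rw [ha]
        push_cast
        rw [ZMod.natCast_val, ZMod.cast_id]
      have hpsia : psi G S H r
          = Int.cast (∑ P, a P * ((lnum G S H / placeDeg G S H P : ℕ) : ℤ)) := by
        rw [← psi_cast G S H a]
        congr 1
        funext P
        rw [hcast]
      rw [h0] at hpsia
      have hdvd : ((lnum G S H : ℕ) : ℤ) ∣ ∑ P, a P * ((lnum G S H / placeDeg G S H P : ℕ) : ℤ) :=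
        (ZMod.intCast_zmod_eq_zero_iff_dvd _ (lnum G S H)).mp hpsia.symm
      obtain ⟨k, hk⟩ := hdvd
      set P₀ : placesBelow G S H := Classical.arbitrary _ with hP₀
      set c : placesBelow G S H → ℤ :=
        fun P => a P - (if P = P₀ then k * (placeDeg G S H P₀ : ℤ) else 0) with hcdef
      have hc : ∑ P : placesBelow G S H, (fm G S H P : ℤ) * c P = 0 := by
        have h1 : ∑ P : placesBelow G S H, (fm G S H P : ℤ) * a P = (Nat.card H : ℤ) * k := by
          have h2 : ∀ P : placesBelow G S H, (fm G S H P : ℤ) * a P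
              = ((Nat.card H / lnum G S H : ℕ) : ℤ)
                * (a P * ((lnum G S H / placeDeg G S H P : ℕ) : ℤ)) := by
            intro P
            rw [fm_eq G S H P]
            push_cast
            ring
          rw [Finset.sum_congr rfl (fun P _ => h2 P), ← Finset.mul_sum, hk,
            ← mul_assoc]
          congr 1
          rw [← Nat.cast_mul, mul_comm (Nat.card H / lnum G S H) (lnum G S H), lnum_mul_t]
        simp only [hcdef, mul_sub]
        rw [Finset.sum_sub_distrib, h1]
        rw [Finset.sum_eq_single P₀]
        · rw [if_pos rfl]
          have hPm : (placeDeg G S H P₀ : ℤ) * (fm G S H P₀ : ℤ) = (Nat.card H : ℤ) := by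
            exact_mod_cast congrArg (Nat.cast : ℕ → ℤ) (placeDeg_mul G S H P₀)
          linear_combination -k * hPm
        · intro b _ hb; rw [if_neg hb, mul_zero]
        · intro hb; exact absurd (Finset.mem_univ _) hb
      refine ⟨⟨Finsupp.equivFunOnFinite.symm
        (fun s => c (Quotient.mk (MulAction.orbitRel H S) s)), mk_mem G S H c hc⟩, ?_⟩
      funext P
      show ((Finsupp.equivFunOnFinite.symm
        (fun s => c (Quotient.mk (MulAction.orbitRel H S) s)) : S →₀ ℤ) P.out : ZMod (placeDeg G S H P)) = r P
      have : (Finsupp.equivFunOnFinite.symm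
          (fun s => c (Quotient.mk (MulAction.orbitRel H S) s)) : S →₀ ℤ) P.out
          = c P := by
        show c (Quotient.mk (MulAction.orbitRel H S) P.out) = c P
        exact congrArg c (Quotient.out_eq P)
      rw [this, hcdef]
      simp only [Int.cast_sub]
      rw [hcast]
      split_ifs with hP
      · subst hP
        push_cast
        simp [ZMod.natCast_self]
      · simp

lemma bezout_finset {α : Type} [DecidableEq α] (t : Finset α) (g : α → ℕ) :
    ∃ z : α → ℤ, ∑ P ∈ t, z P * (g P : ℤ) = ((t.gcd g : ℕ) : ℤ) := by
  induction t using Finset.induction_on with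
  | empty => exact ⟨0, by simp⟩
  | insert a t ha ih =>
    obtain ⟨z, hz⟩ := ih
    set A := Int.gcdA ((g a : ℕ) : ℤ) (((t.gcd g : ℕ)) : ℤ) with hA
    set B := Int.gcdB ((g a : ℕ) : ℤ) (((t.gcd g : ℕ)) : ℤ) with hB
    refine ⟨fun P => if P = a then A else z P * B, ?_⟩
    rw [Finset.sum_insert ha]
    beta_reduce
    rw [if_pos rfl, Finset.gcd_insert]
    have hbez : ((Nat.gcd (g a) (t.gcd g) : ℕ) : ℤ)
        = ((g a : ℕ) : ℤ) * A + (((t.gcd g : ℕ)) : ℤ) * B := by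
      rw [← Int.gcd_natCast_natCast, Int.gcd_eq_gcd_ab]
    have hrest : ∑ P ∈ t, (if P = a then A else z P * B) * (g P : ℤ)
        = (((t.gcd g : ℕ)) : ℤ) * B := by
      rw [Finset.sum_congr rfl (fun P hP => by
        rw [if_neg (by rintro rfl; exact ha hP)])]
      rw [show ∑ P ∈ t, z P * B * (g P : ℤ) = (∑ P ∈ t, z P * (g P : ℤ)) * B by
        rw [Finset.sum_mul]; apply Finset.sum_congr rfl; intro P _; ring]
      rw [hz]
    rw [hrest]
    rw [show (GCDMonoid.gcd (g a) (t.gcd g) : ℕ) = Nat.gcd (g a) (t.gcd g) from rfl]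
    rw [hbez]
    ring

lemma gcd_one (hQ : Nonempty (placesBelow G S H)) :
    Finset.gcd Finset.univ (fun P => lnum G S H / placeDeg G S H P) = 1 := by
  set d := Finset.gcd Finset.univ (fun P => lnum G S H / placeDeg G S H P) with hd
  have hdvd1 : ∀ P : placesBelow G S H, d ∣ lnum G S H / placeDeg G S H P :=
    fun P => Finset.gcd_dvd (Finset.mem_univ P)
  obtain ⟨P₀⟩ := hQ
  have hd_l : d ∣ lnum G S H :=
    dvd_trans (hdvd1 P₀) (Nat.div_dvd_of_dvd (placeDeg_dvd_lnum G S H P₀))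
  have h2 : ∀ P : placesBelow G S H, placeDeg G S H P ∣ lnum G S H / d := by
    intro P
    rw [Nat.dvd_div_iff_mul_dvd hd_l]
    have hh : placeDeg G S H P * d ∣ lnum G S H := by
      calc placeDeg G S H P * d ∣ placeDeg G S H P * (lnum G S H / placeDeg G S H P) :=
            Nat.mul_dvd_mul_left _ (hdvd1 P)
        _ = lnum G S H := Nat.mul_div_cancel' (placeDeg_dvd_lnum G S H P)
    first
      | exact hh
      | rwa [mul_comm] at hh
  have h3 : lnum G S H ∣ lnum G S H / d := Finset.lcm_dvd (fun P _ => h2 P)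
  have h4 : lnum G S H / d ∣ lnum G S H := Nat.div_dvd_of_dvd hd_l
  have h5 : lnum G S H / d = lnum G S H := Nat.dvd_antisymm h4 h3
  have h6 := Nat.mul_div_cancel' hd_l
  rw [h5] at h6
  exact Nat.eq_of_mul_eq_mul_right (lnum_pos G S H) (by rw [h6, one_mul])

lemma psi_surj : Function.Surjective (psi G S H) := by
  rcases isEmpty_or_nonempty (placesBelow G S H) with hQ | hQ
  · have h1 : lnum G S H = 1 := by
      rw [lnum, Finset.univ_eq_empty, Finset.lcm_empty]
    intro w
    refine ⟨0, ?_⟩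
    have : Subsingleton (ZMod (lnum G S H)) := by rw [h1]; infer_instance
    exact Subsingleton.elim _ _
  · obtain ⟨z, hz⟩ := bezout_finset Finset.univ (fun P => lnum G S H / placeDeg G S H P)
    rw [gcd_one G S H hQ] at hz
    push_cast at hz
    have h1 : psi G S H (fun P => ((z P : ℤ) : ZMod (placeDeg G S H P))) = 1 := by
      rw [psi_cast G S H z]
      rw [show (∑ P, z P * ((lnum G S H / placeDeg G S H P : ℕ) : ℤ)) = (1 : ℤ) from hz]
      simp
    intro w
    have hNZ : NeZero (lnum G S H) := ⟨Nat.pos_iff_ne_zero.mp (lnum_pos G S H)⟩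
    refine ⟨w.val • (fun P => ((z P : ℤ) : ZMod (placeDeg G S H P))), ?_⟩
    rw [map_nsmul, h1, nsmul_eq_mul, mul_one, ZMod.natCast_val, ZMod.cast_id]


/-- de Smit. Under the embedding $ℤ[S(K^H)] → ℤ[S]$,
$𝔭 ↦ Σ_{𝔮∣𝔭} f_𝔭 𝔮$, the index of $I_{K^H,S}$ in $(I_{K,S})^H$ equals $n(H)/l(H)$, where
$I_{·,S}$ is the kernel of the augmentation map, $n(H) = ∏_{𝔭 ∈ S(K^H)} f_𝔭$ and
$l(H) = \mathrm{lcm}\{f_𝔭 : 𝔭 ∈ S(K^H)\}$. -/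
theorem stmt18 :
    Nat.card
        (↥(LinearMap.ker (aug S) ⊓ fixedPts G (S →₀ ℤ) H) ⧸
          Submodule.comap (LinearMap.ker (aug S) ⊓ fixedPts G (S →₀ ℤ) H).subtype
            (Submodule.map (placesEmb G S H) (LinearMap.ker (aug (placesBelow G S H)))))
      * (Finset.univ : Finset (placesBelow G S H)).lcm (placeDeg G S H)
    = ∏ P : placesBelow G S H, placeDeg G S H P := by
  have h1 : Nat.card (↥(Lsub G S H) ⧸ Asub G S H)
      = Nat.card ↥(LinearMap.range (phi G S H)) := by
    rw [← ker_phi]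
    exact Nat.card_congr (phi G S H).quotKerEquivRange.toEquiv
  have h2 : Nat.card ↥(LinearMap.range (phi G S H))
      = Nat.card ↥(AddMonoidHom.ker (psi G S H)) := by
    apply Nat.card_congr
    apply Equiv.setCongr
    ext r
    exact (mem_range_phi G S H r).trans (Iff.symm AddMonoidHom.mem_ker)
  have h3 : (AddMonoidHom.ker (psi G S H)).index = lnum G S H := by
    rw [AddSubgroup.index_ker]
    rw [AddMonoidHom.range_eq_top_of_surjective _ (psi_surj G S H)]
    rw [Nat.card_congr (AddSubgroup.topEquiv.toEquiv), Nat.card_zmod]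
  have h4 := AddSubgroup.index_mul_card (AddMonoidHom.ker (psi G S H))
  rw [h3] at h4
  have h5 : Nat.card (∀ P : placesBelow G S H, ZMod (placeDeg G S H P))
      = ∏ P : placesBelow G S H, placeDeg G S H P := by
    rw [Nat.card_pi]
    apply Finset.prod_congr rfl
    intro P _
    rw [Nat.card_zmod]
  show Nat.card (↥(Lsub G S H) ⧸ Asub G S H) * lnum G S H = _
  rw [h1, h2, ← h5, ← h4]
  ring

end DeSmit
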